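/- Let 𝒱 be a real Hilbert space and equip 𝒱 × ℝ₊ with the weakest topology making the projection to 𝒱 weakly continuous and making all functions (w, t) ↦ t² + ‖v − w‖² continuous, as v ranges over 𝒱. Then for every v ∈ 𝒱 and r > 0, the 'closed ball' B̄_r(v) = {(w, t) ∈ 𝒱 × ℝ₊ : t² + ‖v − w‖² ≤ r} is compact in this topology. -/

import Mathlib

open scoped NNReal
open Topology Filter

/-- The topology on `𝒱 × ℝ₊` from Higson–Kasparov–Trout: the weakest (coarsest) topology
making the projection to `𝒱` weakly continuous and making all the functions
`(w, t) ↦ t² + ‖v − w‖²` (for `v ∈ 𝒱`) continuous. -/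
noncomputable def jvTopology (V : Type*) [NormedAddCommGroup V]
    [InnerProductSpace ℝ V] : TopologicalSpace (V × ℝ≥0) :=
  (⨅ u : V, TopologicalSpace.induced
      (fun p : V × ℝ≥0 => (inner ℝ p.1 u : ℝ)) inferInstance) ⊓
  (⨅ v : V, TopologicalSpace.induced
      (fun p : V × ℝ≥0 => ((p.2 : ℝ)) ^ 2 + ‖v - p.1‖ ^ 2) inferInstance)

/-- Compactness of closed balls.
For a real Hilbert space `𝒱`, with the topology above on `𝒱 × ℝ₊`, every closed ball
`B̄_r(v) = {(w, t) : t² + ‖v − w‖² ≤ r}` is compact. -/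
theorem stmt10 {V : Type*} [NormedAddCommGroup V] [InnerProductSpace ℝ V]
    [CompleteSpace V] (v : V) (r : ℝ) (hr : 0 < r) :
    @IsCompact (V × ℝ≥0) (jvTopology V)
      {p : V × ℝ≥0 | ((p.2 : ℝ)) ^ 2 + ‖v - p.1‖ ^ 2 ≤ r} := by
  classical
  letI : TopologicalSpace (V × ℝ≥0) := jvTopology V
  set K : Set (V × ℝ≥0) := {p : V × ℝ≥0 | ((p.2 : ℝ)) ^ 2 + ‖v - p.1‖ ^ 2 ≤ r} with hKdef
  rw [isCompact_iff_ultrafilter_le_nhds]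
  intro F hF
  have hKmem : K ∈ F := Filter.le_principal_iff.mp hF
  have hbase : ∀ᶠ p : V × ℝ≥0 in ↑F, p ∈ K := hKmem
  -- basic bounds on K
  have hnormK : ∀ p ∈ K, ‖v - p.1‖ ≤ Real.sqrt r := by
    intro p hp
    have h1 : ‖v - p.1‖ ^ 2 ≤ r := by
      have := hp; simp only [hKdef, Set.mem_setOf_eq] at this
      nlinarith [sq_nonneg ((p.2 : ℝ))]
    calc ‖v - p.1‖ = Real.sqrt (‖v - p.1‖ ^ 2) := (Real.sqrt_sq (norm_nonneg _)).symm
      _ ≤ Real.sqrt r := Real.sqrt_le_sqrt h1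
  set C : ℝ := ‖v‖ + Real.sqrt r with hCdef
  have hC1 : ∀ p ∈ K, ‖p.1‖ ≤ C := by
    intro p hp
    calc ‖p.1‖ = ‖v - (v - p.1)‖ := by congr 1; abel
      _ ≤ ‖v‖ + ‖v - p.1‖ := norm_sub_le _ _
      _ ≤ C := by have := hnormK p hp; simp [hCdef]; linarith
  -- existence of limits of the weak coordinates
  have exg : ∀ u : V, ∃ L : ℝ,
      Filter.Tendsto (fun p : V × ℝ≥0 => (inner ℝ p.1 u : ℝ)) ↑F (𝓝 L) := by
    intro u
    have hsub : ↑(F.map (fun p : V × ℝ≥0 => (inner ℝ p.1 u : ℝ)))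
        ≤ Filter.principal (Set.Icc (-(C * ‖u‖)) (C * ‖u‖)) := by
      rw [Ultrafilter.coe_map, Filter.le_principal_iff, Filter.mem_map]
      refine Filter.mem_of_superset hKmem ?_
      intro p hp
      have h1 : |(inner ℝ p.1 u : ℝ)| ≤ C * ‖u‖ := by
        calc |(inner ℝ p.1 u : ℝ)| ≤ ‖p.1‖ * ‖u‖ := abs_real_inner_le_norm _ _
          _ ≤ C * ‖u‖ := mul_le_mul_of_nonneg_right (hC1 p hp) (norm_nonneg _)
      simpa [Set.mem_Icc] using abs_le.mp h1
    obtain ⟨L, _, hL⟩ := (isCompact_Icc).ultrafilter_le_nhds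
      (F.map (fun p : V × ℝ≥0 => (inner ℝ p.1 u : ℝ))) hsub
    exact ⟨L, hL⟩
  -- existence of limits of the quadratic coordinates
  have exh : ∀ z : V, ∃ L : ℝ,
      Filter.Tendsto (fun p : V × ℝ≥0 => ((p.2 : ℝ)) ^ 2 + ‖z - p.1‖ ^ 2) ↑F (𝓝 L) := by
    intro z
    set M : ℝ := r + (‖z - v‖ + Real.sqrt r) ^ 2 with hMdef
    have hsub : ↑(F.map (fun p : V × ℝ≥0 => ((p.2 : ℝ)) ^ 2 + ‖z - p.1‖ ^ 2))
        ≤ Filter.principal (Set.Icc (0:ℝ) M) := by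
      rw [Ultrafilter.coe_map, Filter.le_principal_iff, Filter.mem_map]
      refine Filter.mem_of_superset hKmem ?_
      intro p hp
      have hpK := hp; simp only [hKdef, Set.mem_setOf_eq] at hpK
      have h2 : ‖z - p.1‖ ≤ ‖z - v‖ + Real.sqrt r := by
        calc ‖z - p.1‖ = ‖(z - v) + (v - p.1)‖ := by congr 1; abel
          _ ≤ ‖z - v‖ + ‖v - p.1‖ := norm_add_le _ _
          _ ≤ ‖z - v‖ + Real.sqrt r := by linarith [hnormK p hp]
      have h3 : (p.2 : ℝ) ^ 2 ≤ r := by nlinarith [sq_nonneg ‖v - p.1‖]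
      have h4 : ‖z - p.1‖ ^ 2 ≤ (‖z - v‖ + Real.sqrt r) ^ 2 := by
        have h0 : (0:ℝ) ≤ ‖z - p.1‖ := norm_nonneg _
        nlinarith
      constructor
      · positivity
      · simp only [hMdef]; linarith
    obtain ⟨L, _, hL⟩ := (isCompact_Icc).ultrafilter_le_nhds
      (F.map (fun p : V × ℝ≥0 => ((p.2 : ℝ)) ^ 2 + ‖z - p.1‖ ^ 2)) hsub
    exact ⟨L, hL⟩
  choose g hg using exg
  choose h hh using exh
  -- g is bounded
  have hgbound : ∀ u : V, |g u| ≤ C * ‖u‖ := by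
    intro u
    refine le_of_tendsto (hg u).abs ?_
    filter_upwards [hbase] with p hp
    calc |(inner ℝ p.1 u : ℝ)| ≤ ‖p.1‖ * ‖u‖ := abs_real_inner_le_norm _ _
      _ ≤ C * ‖u‖ := mul_le_mul_of_nonneg_right (hC1 p hp) (norm_nonneg _)
  -- g is linear
  have hgadd : ∀ u u' : V, g (u + u') = g u + g u' := by
    intro u u'
    refine tendsto_nhds_unique (hg (u + u')) ?_
    have := (hg u).add (hg u')
    refine this.congr fun p => ?_
    rw [inner_add_right]
  have hgsmul : ∀ (c : ℝ) (u : V), g (c • u) = c * g u := by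
    intro c u
    refine tendsto_nhds_unique (hg (c • u)) ?_
    have := (hg u).const_mul c
    refine this.congr fun p => ?_
    rw [real_inner_smul_right]
  -- construct w by Riesz representation
  let φL : V →ₗ[ℝ] ℝ :=
    { toFun := g
      map_add' := hgadd
      map_smul' := hgsmul }
  let φ : V →L[ℝ] ℝ := φL.mkContinuous C (fun u => by
    simpa [Real.norm_eq_abs, φL] using hgbound u)
  set w : V := (InnerProductSpace.toDual ℝ V).symm φ with hwdef
  have hw : ∀ u : V, (inner ℝ w u : ℝ) = g u := by
    intro u
    rw [hwdef, InnerProductSpace.toDual_symm_apply]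
    rfl
  -- relation between h and g
  have hrel : ∀ z : V, h z = h 0 + ‖z‖ ^ 2 - 2 * g z := by
    intro z
    refine tendsto_nhds_unique (hh z) ?_
    have h1 : Filter.Tendsto
        (fun p : V × ℝ≥0 => (((p.2 : ℝ)) ^ 2 + ‖(0:V) - p.1‖ ^ 2) + ‖z‖ ^ 2
          - 2 * (inner ℝ p.1 z : ℝ)) ↑F (𝓝 (h 0 + ‖z‖ ^ 2 - 2 * g z)) :=
      ((hh 0).add_const _).sub ((hg z).const_mul 2)
    refine h1.congr fun p => ?_
    have e1 : ‖z - p.1‖ ^ 2 = ‖z‖ ^ 2 - 2 * (inner ℝ z p.1 : ℝ) + ‖p.1‖ ^ 2 :=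
      norm_sub_sq_real z p.1
    have e2 : ‖(0:V) - p.1‖ ^ 2 = ‖p.1‖ ^ 2 := by rw [zero_sub, norm_neg]
    rw [e2]
    linarith [e1, real_inner_comm p.1 z]
  have hgw : g w = ‖w‖ ^ 2 := by rw [← hw w, real_inner_self_eq_norm_sq]
  -- ‖w‖² ≤ h 0
  have hs : ‖w‖ ^ 2 ≤ h 0 := by
    have h1 : Filter.Tendsto
        (fun p : V × ℝ≥0 => ((((p.2 : ℝ)) ^ 2 + ‖(0:V) - p.1‖ ^ 2) + ‖w‖ ^ 2) / 2)
        ↑F (𝓝 ((h 0 + ‖w‖ ^ 2) / 2)) := ((hh 0).add_const _).div_const 2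
    have h2 : g w ≤ (h 0 + ‖w‖ ^ 2) / 2 := by
      refine le_of_tendsto_of_tendsto' (hg w) h1 fun p => ?_
      have e2 : ‖(0:V) - p.1‖ = ‖p.1‖ := by rw [zero_sub, norm_neg]
      have h3 : (inner ℝ p.1 w : ℝ) ≤ ‖p.1‖ * ‖w‖ := real_inner_le_norm _ _
      rw [e2]
      nlinarith [sq_nonneg (‖p.1‖ - ‖w‖), sq_nonneg ((p.2 : ℝ))]
    rw [hgw] at h2; linarith
  set s : ℝ := h 0 - ‖w‖ ^ 2 with hsdef
  have hs0 : 0 ≤ s := by simp [hsdef]; linarith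
  set t₀ : ℝ≥0 := ⟨Real.sqrt s, Real.sqrt_nonneg _⟩ with ht₀def
  have ht0 : ((t₀ : ℝ)) ^ 2 = s := Real.sq_sqrt hs0
  -- the key pointwise identity at the limit
  have hft : ∀ z : V, ((t₀ : ℝ)) ^ 2 + ‖z - w‖ ^ 2 = h z := by
    intro z
    rw [ht0, hrel z]
    have e1 : ‖z - w‖ ^ 2 = ‖z‖ ^ 2 - 2 * (inner ℝ z w : ℝ) + ‖w‖ ^ 2 :=
      norm_sub_sq_real z w
    linarith [e1, real_inner_comm w z, hw z, hsdef]
  -- membership of the limit point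
  have hmem : (w, t₀) ∈ K := by
    have h1 : h v ≤ r := by
      refine le_of_tendsto (hh v) ?_
      filter_upwards [hbase] with p hp
      exact hp
    simp only [hKdef, Set.mem_setOf_eq]
    rw [hft v] at *
    exact h1
  refine ⟨(w, t₀), hmem, ?_⟩
  -- convergence in the jvTopology
  have e1 : @nhds _ (jvTopology V) (w, t₀) =
      (⨅ u : V, Filter.comap (fun p : V × ℝ≥0 => (inner ℝ p.1 u : ℝ))
        (𝓝 (inner ℝ w u : ℝ))) ⊓
      (⨅ z : V, Filter.comap (fun p : V × ℝ≥0 => ((p.2 : ℝ)) ^ 2 + ‖z - p.1‖ ^ 2)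
        (𝓝 (((t₀ : ℝ)) ^ 2 + ‖z - w‖ ^ 2))) := by
    refine (_root_.nhds_inf
      (t₁ := ⨅ u : V, TopologicalSpace.induced
        (fun p : V × ℝ≥0 => (inner ℝ p.1 u : ℝ)) inferInstance)
      (t₂ := ⨅ z : V, TopologicalSpace.induced
        (fun p : V × ℝ≥0 => ((p.2 : ℝ)) ^ 2 + ‖z - p.1‖ ^ 2) inferInstance)).trans ?_
    rw [_root_.nhds_iInf, _root_.nhds_iInf]
    congr 1 <;> exact iInf_congr fun u => nhds_induced _ _
  have hconv : ↑F ≤ @nhds _ (jvTopology V) (w, t₀) := by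
    rw [e1]
    refine le_inf (le_iInf fun u => ?_) (le_iInf fun z => ?_)
    · rw [← Filter.map_le_iff_le_comap]
      have h1 := hg u
      rw [← hw u] at h1
      exact h1
    · rw [← Filter.map_le_iff_le_comap]
      have h1 := hh z
      rw [← hft z] at h1
      exact h1
  exact hconv
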